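/- arXiv:1008.1081 — 2 statements merged into one kernel-verified Lean document; each statement's English description precedes it below -/
import Mathlib

section
/- (Theorem 5.1, forward direction.) Let Ã ∈ M be closed, corresponding to T : V → W. Then T is a densely defined operator in V (i.e., D(T) is dense in V), T maps into W, T is closed as an operator from V to W, and D(Ã) = {u ∈ D(A_max) : u_ζ ∈ D(T) and pr_W(A_max u) = T u_ζ}. -/
noncomputable section

open Filter Topology

namespace GrubbExt

variable {H : Type*} [NormedAddCommGroup H] [InnerProductSpace ℂ H] [CompleteSpace H]

/-- The inclusion of a closed subspace composed with the orthogonal projection onto it,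
as a continuous linear map `H →L[ℂ] H`.  This is `i_K ∘ pr_K` in the notation of the paper. -/
def projCl (K : Submodule ℂ H) (hK : IsClosed (K : Set H)) : H →L[ℂ] H :=
  haveI : CompleteSpace K := hK.completeSpace_coe
  K.subtypeL.comp K.orthogonalProjectionOnto

/-- `R` is the (everywhere defined, bounded) inverse of `P - lam`. -/
structure IsResolvent (P : H →ₗ.[ℂ] H) (lam : ℂ) (R : H →L[ℂ] H) : Prop where
  mem : ∀ f : H, R f ∈ P.domain
  left : ∀ u : P.domain, R (P u - lam • (u : H)) = u
  right : ∀ f : H, P ⟨R f, mem f⟩ - lam • R f = f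

/-- `E^λ := I + λ(A_γ - λ)^{-1}`, given the resolvent `R = (A_γ - λ)^{-1}`. -/
def Eop (lam : ℂ) (R : H →L[ℂ] H) : H →L[ℂ] H := ContinuousLinearMap.id ℂ H + lam • R

/-- `E'^{λ̄} := I + λ̄(A_γ^* - λ̄)^{-1}`, given the resolvent `R' = (A_γ^* - λ̄)^{-1}`. -/
def Eop' (lam : ℂ) (R' : H →L[ℂ] H) : H →L[ℂ] H :=
  ContinuousLinearMap.id ℂ H + (starRingEnd ℂ lam) • R'

/-- The resolvent set of a partially defined operator. -/
def resSet (P : H →ₗ.[ℂ] H) : Set ℂ := {lam | ∃ R : H →L[ℂ] H, IsResolvent P lam R}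

/-- The set of "Rayleigh quotients" `Re⟨Pu,u⟩` over unit vectors `u` in the domain of `P`;
the lower bound `m(P)` is the infimum of this set. -/
def raySet (P : H →ₗ.[ℂ] H) : Set ℝ :=
  {r | ∃ u : P.domain, ‖(u : H)‖ = 1 ∧ r = (inner ℂ (P u) (u : H) : ℂ).re}

/-- The abstract set-up of Grubb's extension theory: a dual pair `A_min, A'_min` of closed
densely defined operators in a Hilbert space `H`, together with a reference operator `A_γ`
lying between `A_min` and `A_max := (A'_min)*`, which is bijective with bounded inverse
(and whose adjoint is likewise bijective with bounded inverse). -/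
structure Setup (H : Type*) [NormedAddCommGroup H] [InnerProductSpace ℂ H]
    [CompleteSpace H] where
  Amin : H →ₗ.[ℂ] H
  Amin' : H →ₗ.[ℂ] H
  closed_Amin : IsClosed (Amin.graph : Set (H × H))
  closed_Amin' : IsClosed (Amin'.graph : Set (H × H))
  dense_Amin : Dense (Amin.domain : Set H)
  dense_Amin' : Dense (Amin'.domain : Set H)
  Amin_le_max : Amin ≤ Amin'.adjoint
  Amin'_le_max' : Amin' ≤ Amin.adjoint
  Agam : H →ₗ.[ℂ] H
  Amin_le_Agam : Amin ≤ Agam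
  Agam_le_max : Agam ≤ Amin'.adjoint
  Agaminv : H →L[ℂ] H
  Agaminv_mem : ∀ f : H, Agaminv f ∈ Agam.domain
  Agaminv_left : ∀ u : Agam.domain, Agaminv (Agam u) = u
  Agaminv_right : ∀ f : H, Agam ⟨Agaminv f, Agaminv_mem f⟩ = f
  Agamstarinv : H →L[ℂ] H
  Agamstarinv_mem : ∀ f : H, Agamstarinv f ∈ Agam.adjoint.domain
  Agamstarinv_left : ∀ v : Agam.adjoint.domain, Agamstarinv (Agam.adjoint v) = v
  Agamstarinv_right : ∀ f : H, Agam.adjoint ⟨Agamstarinv f, Agamstarinv_mem f⟩ = f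

namespace Setup

variable (S : Setup H)

/-- `A_max := (A'_min)*`. -/
def Amax : H →ₗ.[ℂ] H := S.Amin'.adjoint

/-- `A'_max := (A_min)*`. -/
def Amax' : H →ₗ.[ℂ] H := S.Amin.adjoint

/-- `u_ζ := u - A_γ^{-1} A_max u`, the nullspace component of `u ∈ D(A_max)`. -/
def uzeta (u : S.Amax.domain) : H := (u : H) - S.Agaminv (S.Amax u)

/-- `v_{ζ'} := v - (A_γ^*)^{-1} A'_max v`, the nullspace component of `v ∈ D(A'_max)`. -/
def vzeta (v : S.Amax'.domain) : H := (v : H) - S.Agamstarinv (S.Amax' v)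

/-- `Z := ker A_max`, as a submodule of `H`. -/
def Zker : Submodule ℂ H := (LinearMap.ker S.Amax.toFun).map S.Amax.domain.subtype

/-- `Z' := ker A'_max`, as a submodule of `H`. -/
def Zker' : Submodule ℂ H := (LinearMap.ker S.Amax'.toFun).map S.Amax'.domain.subtype

lemma coe_Zker :
    (S.Zker : Set H) = ⋂ v : S.Amin'.domain, {y : H | (inner ℂ y (S.Amin' v) : ℂ) = 0} := by
  ext y
  simp only [Set.mem_iInter, Set.mem_setOf_eq, SetLike.mem_coe, Zker, Submodule.mem_map,
    LinearMap.mem_ker]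
  constructor
  · rintro ⟨u, hu, rfl⟩ v
    have h := (LinearPMap.adjoint_isFormalAdjoint S.dense_Amin') u v
    have hu' : S.Amin'.adjoint u = 0 := hu
    rw [hu'] at h
    simpa using h.symm
  · intro h
    have hmem : y ∈ S.Amax.domain := by
      refine LinearPMap.mem_adjoint_domain_of_exists _ ⟨0, fun x => ?_⟩
      simp [h x]
    refine ⟨⟨y, hmem⟩, ?_, rfl⟩
    exact LinearPMap.adjoint_apply_eq S.dense_Amin' ⟨y, hmem⟩ fun x => by simp [h x]

lemma isClosed_Zker : IsClosed (S.Zker : Set H) := by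
  rw [S.coe_Zker]
  exact isClosed_iInter fun v =>
    isClosed_eq (Continuous.inner continuous_id continuous_const) continuous_const

lemma coe_Zker' :
    (S.Zker' : Set H) = ⋂ v : S.Amin.domain, {y : H | (inner ℂ y (S.Amin v) : ℂ) = 0} := by
  ext y
  simp only [Set.mem_iInter, Set.mem_setOf_eq, SetLike.mem_coe, Zker', Submodule.mem_map,
    LinearMap.mem_ker]
  constructor
  · rintro ⟨u, hu, rfl⟩ v
    have h := (LinearPMap.adjoint_isFormalAdjoint S.dense_Amin) u v
    have hu' : S.Amin.adjoint u = 0 := hu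
    rw [hu'] at h
    simpa using h.symm
  · intro h
    have hmem : y ∈ S.Amax'.domain := by
      refine LinearPMap.mem_adjoint_domain_of_exists _ ⟨0, fun x => ?_⟩
      simp [h x]
    refine ⟨⟨y, hmem⟩, ?_, rfl⟩
    exact LinearPMap.adjoint_apply_eq S.dense_Amin ⟨y, hmem⟩ fun x => by simp [h x]

lemma isClosed_Zker' : IsClosed (S.Zker' : Set H) := by
  rw [S.coe_Zker']
  exact isClosed_iInter fun v =>
    isClosed_eq (Continuous.inner continuous_id continuous_const) continuous_const

/-- The orthogonal projection onto `Z = ker A_max`. -/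
def projZ : H →L[ℂ] H := projCl S.Zker S.isClosed_Zker

/-- The orthogonal projection onto `Z' = ker A'_max`. -/
def projZ' : H →L[ℂ] H := projCl S.Zker' S.isClosed_Zker'

variable (At : H →ₗ.[ℂ] H)

/-- `D(T) = {u_ζ : u ∈ D(Ã)}`, the set of nullspace components of elements of `D(Ã)`. -/
def dzeta : Set H := {x | ∃ u : S.Amax.domain, (u : H) ∈ At.domain ∧ x = S.uzeta u}

/-- `{v_{ζ'} : v ∈ D(Ã*)}`. -/
def dzeta' : Set H := {x | ∃ v : S.Amax'.domain, (v : H) ∈ At.adjoint.domain ∧ x = S.vzeta v}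

/-- `V := closure {u_ζ : u ∈ D(Ã)}`. -/
def Vsub : Submodule ℂ H := (Submodule.span ℂ (S.dzeta At)).topologicalClosure

/-- `W := closure {v_{ζ'} : v ∈ D(Ã*)}`. -/
def Wsub : Submodule ℂ H := (Submodule.span ℂ (S.dzeta' At)).topologicalClosure

lemma isClosed_Vsub : IsClosed ((S.Vsub At : Set H)) :=
  Submodule.isClosed_topologicalClosure _

lemma isClosed_Wsub : IsClosed ((S.Wsub At : Set H)) :=
  Submodule.isClosed_topologicalClosure _

/-- The orthogonal projection onto `V`. -/
def projV : H →L[ℂ] H := projCl (S.Vsub At) (S.isClosed_Vsub At)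

/-- The orthogonal projection onto `W`. -/
def projW : H →L[ℂ] H := projCl (S.Wsub At) (S.isClosed_Wsub At)

/-- The set `{(u_ζ, pr_W (A_max u)) : u ∈ D(Ã)}`, for a general closed subspace `W`. -/
def TgraphOn (W : Submodule ℂ H) (hW : IsClosed (W : Set H)) : Set (H × H) :=
  {p | ∃ u : S.Amax.domain, (u : H) ∈ At.domain ∧ p.1 = S.uzeta u ∧
    p.2 = projCl W hW (S.Amax u)}

/-- The graph of the operator `T : V → W` corresponding to `Ã`. -/
def Tgraph : Set (H × H) := S.TgraphOn At (S.Wsub At) (S.isClosed_Wsub At)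


/-- `F^λ := I - λ A_γ^{-1}`. -/
def Fop (lam : ℂ) : H →L[ℂ] H := ContinuousLinearMap.id ℂ H - lam • S.Agaminv

/-- `F'^{λ̄} := I - λ̄ (A_γ^*)^{-1}`. -/
def Fop' (lam : ℂ) : H →L[ℂ] H := ContinuousLinearMap.id ℂ H - (starRingEnd ℂ lam) • S.Agamstarinv

/-- `Z_λ := ker(A_max - λ)`, as a subset of `H`. -/
def ZkerL (lam : ℂ) : Set H :=
  {x | ∃ hx : x ∈ S.Amax.domain, S.Amax ⟨x, hx⟩ = lam • x}

/-- `Z'_{λ̄} := ker(A'_max - λ̄)`, as a subset of `H`. -/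
def ZkerL' (lam : ℂ) : Set H :=
  {x | ∃ hx : x ∈ S.Amax'.domain, S.Amax' ⟨x, hx⟩ = (starRingEnd ℂ lam) • x}

/-- `pr^λ_ζ u := u - (A_γ - λ)^{-1}(A_max - λ)u`, given the resolvent `R = (A_γ - λ)^{-1}`. -/
def uzetaL (lam : ℂ) (R : H →L[ℂ] H) (u : S.Amax.domain) : H :=
  (u : H) - R (S.Amax u - lam • (u : H))

/-- `pr^{λ̄}_{ζ'} v := v - (A_γ^* - λ̄)^{-1}(A'_max - λ̄)v`,
given the resolvent `R' = (A_γ^* - λ̄)^{-1}`. -/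
def vzetaL (lam : ℂ) (R' : H →L[ℂ] H) (v : S.Amax'.domain) : H :=
  (v : H) - R' (S.Amax' v - (starRingEnd ℂ lam) • (v : H))

/-- `D(T^λ) = {pr^λ_ζ u : u ∈ D(Ã)}`. -/
def dzetaL (lam : ℂ) (R : H →L[ℂ] H) : Set H :=
  {x | ∃ u : S.Amax.domain, (u : H) ∈ At.domain ∧ x = S.uzetaL lam R u}

/-- `{pr^{λ̄}_{ζ'} v : v ∈ D(Ã*)}`. -/
def dzetaL' (lam : ℂ) (R' : H →L[ℂ] H) : Set H :=
  {x | ∃ v : S.Amax'.domain, (v : H) ∈ At.adjoint.domain ∧ x = S.vzetaL lam R' v}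

/-- `V_λ := closure {pr^λ_ζ u : u ∈ D(Ã)}`. -/
def VLsub (lam : ℂ) (R : H →L[ℂ] H) : Submodule ℂ H :=
  (Submodule.span ℂ (S.dzetaL At lam R)).topologicalClosure

/-- `W_{λ̄} := closure {pr^{λ̄}_{ζ'} v : v ∈ D(Ã*)}`. -/
def WLsub (lam : ℂ) (R' : H →L[ℂ] H) : Submodule ℂ H :=
  (Submodule.span ℂ (S.dzetaL' At lam R')).topologicalClosure

lemma isClosed_WLsub (lam : ℂ) (R' : H →L[ℂ] H) : IsClosed ((S.WLsub At lam R' : Set H)) :=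
  Submodule.isClosed_topologicalClosure _

/-- The orthogonal projection onto `W_{λ̄}`. -/
def projWL (lam : ℂ) (R' : H →L[ℂ] H) : H →L[ℂ] H :=
  projCl (S.WLsub At lam R') (S.isClosed_WLsub At lam R')

/-- The graph of the operator `T^λ : V_λ → W_{λ̄}` corresponding to `Ã - λ`:
`{(pr^λ_ζ u, pr_{W_{λ̄}}((A_max - λ)u)) : u ∈ D(Ã)}`. -/
def TgraphL (lam : ℂ) (R R' : H →L[ℂ] H) : Set (H × H) :=
  {p | ∃ u : S.Amax.domain, (u : H) ∈ At.domain ∧ p.1 = S.uzetaL lam R u ∧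
    p.2 = S.projWL At lam R' (S.Amax u - lam • (u : H))}

/-- `G^λ_{V,W} x := -pr_W (λ E^λ x)`, where `W = W(Ã)`. -/
def Gval (lam : ℂ) (R : H →L[ℂ] H) (x : H) : H :=
  -(S.projW At (lam • Eop lam R x))

/-- `G^μ_{Z,Z} z := -pr_Z (μ E^μ z)`. -/
def GZval (lam : ℂ) (R : H →L[ℂ] H) (x : H) : H :=
  -(S.projZ (lam • Eop lam R x))

lemma mem_Amax_res {lam : ℂ} {Rt : H →L[ℂ] H} (h2 : At ≤ S.Amax)
    (hRt : IsResolvent At lam Rt) (w : H) :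
    S.Agaminv w - Rt (w - lam • S.Agaminv w) ∈ S.Amax.domain :=
  Submodule.sub_mem _ (S.Agam_le_max.1 (S.Agaminv_mem w)) (h2.1 (hRt.mem _))

/-- `M(λ) w := pr_ζ ((I - (Ã - λ)^{-1}(A_max - λ)) A_γ^{-1} w)`, the value of the abstract
`M`-function on `w`. -/
def Mval {lam : ℂ} {Rt : H →L[ℂ] H} (h2 : At ≤ S.Amax) (hRt : IsResolvent At lam Rt)
    (w : H) : H :=
  S.uzeta ⟨S.Agaminv w - Rt (w - lam • S.Agaminv w), S.mem_Amax_res At h2 hRt w⟩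

end Setup

lemma graph_mem_of_forall_adjoint (At : H →ₗ.[ℂ] H) (hd : Dense (At.domain : Set H))
    (hcl : IsClosed (At.graph : Set (H × H))) (u f : H)
    (h : ∀ v : At.adjoint.domain, (inner ℂ (At.adjoint v) u : ℂ) = inner ℂ (v : H) f) :
    (u, f) ∈ At.graph := by
  set e : WithLp 2 (H × H) ≃L[ℂ] H × H := WithLp.prodContinuousLinearEquiv 2 ℂ H H with he
  set G : Submodule ℂ (WithLp 2 (H × H)) := At.graph.comap (e : WithLp 2 (H × H) →ₗ[ℂ] H × H)
    with hGdef
  have hG : IsClosed (G : Set (WithLp 2 (H × H))) := by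
    have : (G : Set (WithLp 2 (H × H))) = ⇑e ⁻¹' (At.graph : Set (H × H)) := rfl
    rw [this]
    exact hcl.preimage e.continuous
  haveI : CompleteSpace G := hG.completeSpace_coe
  have key : Gᗮᗮ = G := Submodule.orthogonal_orthogonal G
  have hx : e.symm (u, f) ∈ G := by
    rw [← key, Submodule.mem_orthogonal]
    intro z hz
    rw [Submodule.mem_orthogonal] at hz
    have hz' : ∀ w : At.domain, (inner ℂ (w : H) z.fst : ℂ) + inner ℂ (At w) z.snd = 0 := by
      intro w
      have hmem : e.symm ((w : H), At w) ∈ G := by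
        show e (e.symm ((w : H), At w)) ∈ At.graph
        rw [e.apply_symm_apply]
        exact At.mem_graph w
      have := hz _ hmem
      simpa [he, WithLp.prodContinuousLinearEquiv_symm_apply, WithLp.prod_inner_apply] using this
    have hz'' : ∀ w : At.domain, (inner ℂ (-z.fst) (w : H) : ℂ) = inner ℂ z.snd (At w) := by
      intro w
      have := congrArg (starRingEnd ℂ) (hz' w)
      simp only [map_add, inner_conj_symm, map_zero] at this
      rw [inner_neg_left]
      linear_combination -this
    have hb : z.snd ∈ At.adjoint.domain :=
      LinearPMap.mem_adjoint_domain_of_exists _ ⟨-z.fst, hz''⟩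
    have hadj : At.adjoint ⟨z.snd, hb⟩ = -z.fst :=
      LinearPMap.adjoint_apply_eq hd _ hz''
    have hfin := h ⟨z.snd, hb⟩
    rw [hadj, inner_neg_left] at hfin
    have : (inner ℂ z.fst u : ℂ) + inner ℂ z.snd f = 0 := by linear_combination -hfin
    simpa [he, WithLp.prodContinuousLinearEquiv_symm_apply, WithLp.prod_inner_apply] using this
  show ((u, f) : H × H) ∈ At.graph
  have := hx
  rw [hGdef, Submodule.mem_comap] at this
  simpa using this

lemma projCl_mem (K : Submodule ℂ H) (hK : IsClosed (K : Set H)) (x : H) :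
    projCl K hK x ∈ K := by
  haveI : CompleteSpace K := hK.completeSpace_coe
  exact (K.orthogonalProjectionOnto x).2

lemma projCl_eq_self (K : Submodule ℂ H) (hK : IsClosed (K : Set H)) {x : H} (hx : x ∈ K) :
    projCl K hK x = x := by
  haveI : CompleteSpace K := hK.completeSpace_coe
  exact K.starProjection_eq_self_iff.2 hx

lemma sub_projCl_mem_orthogonal (K : Submodule ℂ H) (hK : IsClosed (K : Set H)) (x : H) :
    x - projCl K hK x ∈ Kᗮ := by
  haveI : CompleteSpace K := hK.completeSpace_coe
  exact K.sub_starProjection_mem_orthogonal x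

lemma adjoint_le_Amax' (S : Setup H) (At : H →ₗ.[ℂ] H) (h1 : S.Amin ≤ At) :
    At.adjoint ≤ S.Amax' := by
  have hdAt : Dense (At.domain : Set H) := S.dense_Amin.mono h1.1
  have hfa : S.Amin.IsFormalAdjoint At.adjoint := by
    intro x y
    have h := ((LinearPMap.adjoint_isFormalAdjoint hdAt).symm) ⟨(x : H), h1.1 x.2⟩ y
    rwa [← h1.2 (x := x) rfl] at h
  exact hfa.le_adjoint S.dense_Amin

lemma key_graph (S : Setup H) (At : H →ₗ.[ℂ] H) (h1 : S.Amin ≤ At)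
    (hcl : IsClosed (At.graph : Set (H × H))) {f : H} (hf : f ∈ (S.Wsub At)ᗮ) :
    (S.Agaminv f, f) ∈ At.graph := by
  have hdAt : Dense (At.domain : Set H) := S.dense_Amin.mono h1.1
  have hle := adjoint_le_Amax' S At h1
  apply graph_mem_of_forall_adjoint At hdAt hcl
  intro v
  have hv' : (v : H) ∈ S.Amax'.domain := hle.1 v.2
  have heq : At.adjoint v = S.Amax' ⟨v, hv'⟩ := hle.2 rfl
  rw [heq]
  set g := S.Amax' ⟨(v : H), hv'⟩ with hg
  have hγmem := S.Agamstarinv_mem g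
  have hr : S.Agam.adjoint ⟨S.Agamstarinv g, hγmem⟩ = g := S.Agamstarinv_right g
  have hdγ : Dense (S.Agam.domain : Set H) := S.dense_Amin.mono S.Amin_le_Agam.1
  have h1' : (inner ℂ g (S.Agaminv f) : ℂ) = inner ℂ (S.Agamstarinv g) f := by
    conv_lhs => rw [← hr]
    have h2' := (LinearPMap.adjoint_isFormalAdjoint hdγ) ⟨S.Agamstarinv g, hγmem⟩
      ⟨S.Agaminv f, S.Agaminv_mem f⟩
    rw [h2', S.Agaminv_right f]
  have hζ : S.vzeta ⟨(v : H), hv'⟩ ∈ S.Wsub At := by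
    apply Submodule.le_topologicalClosure
    apply Submodule.subset_span
    exact ⟨⟨(v : H), hv'⟩, v.2, rfl⟩
  have hzero : (inner ℂ (S.vzeta ⟨(v : H), hv'⟩) f : ℂ) = 0 :=
    (Submodule.mem_orthogonal _ f).1 hf _ hζ
  have hsplit : (v : H) = S.Agamstarinv g + S.vzeta ⟨(v : H), hv'⟩ := by
    simp [Setup.vzeta, hg]
  calc (inner ℂ g (S.Agaminv f) : ℂ) = inner ℂ (S.Agamstarinv g) f := h1'
    _ = inner ℂ (S.Agamstarinv g) f + inner ℂ (S.vzeta ⟨(v : H), hv'⟩) f := by rw [hzero]; ring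
    _ = inner ℂ ((v : H)) f := by rw [← inner_add_left, ← hsplit]

theorem statement_3 (S : Setup H) (At : H →ₗ.[ℂ] H)
    (h1 : S.Amin ≤ At) (h2 : At ≤ S.Amax)
    (hcl : IsClosed (At.graph : Set (H × H)))
    (T : H →ₗ.[ℂ] H) (hT : (T.graph : Set (H × H)) = S.Tgraph At) :
    closure (T.domain : Set H) = (S.Vsub At : Set H) ∧
    (∀ x : T.domain, T x ∈ S.Wsub At) ∧
    IsClosed (T.graph : Set (H × H)) ∧
    (At.domain : Set H) =
      {x : H | ∃ hx : x ∈ S.Amax.domain,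
        (S.uzeta ⟨x, hx⟩, S.projW At (S.Amax ⟨x, hx⟩)) ∈ T.graph} := by
  have hdAt : Dense (At.domain : Set H) := S.dense_Amin.mono h1.1
  have hdomset : (T.domain : Set H) = S.dzeta At := by
    ext x
    constructor
    · intro hx
      have hg := T.mem_graph ⟨x, hx⟩
      have : ((x, T ⟨x, hx⟩) : H × H) ∈ (T.graph : Set (H × H)) := hg
      rw [hT] at this
      obtain ⟨u, hu, h1', _⟩ := this
      exact ⟨u, hu, h1'⟩
    · rintro ⟨u, hu, rfl⟩
      have hmem : ((S.uzeta u, projCl (S.Wsub At) (S.isClosed_Wsub At) (S.Amax u)) : H × H)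
          ∈ (T.graph : Set (H × H)) := by
        rw [hT]; exact ⟨u, hu, rfl, rfl⟩
      exact LinearPMap.mem_domain_iff.2 ⟨_, hmem⟩
  have hspan : Submodule.span ℂ (S.dzeta At) = T.domain := by
    rw [← hdomset]; exact Submodule.span_eq _
  refine ⟨?_, ?_, ?_, ?_⟩
  · show closure (T.domain : Set H) = _
    simp only [Setup.Vsub, hspan, Submodule.topologicalClosure_coe]
  · intro x
    have hg := T.mem_graph x
    have : (((x : H), T x) : H × H) ∈ (T.graph : Set (H × H)) := hg
    rw [hT] at this
    obtain ⟨u, _, _, h2'⟩ := this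
    have h2'' : (T x : H) = projCl (S.Wsub At) (S.isClosed_Wsub At) (S.Amax u) := h2'
    rw [h2'']
    exact projCl_mem _ _ _
  · have : (T.graph : Set (H × H)) = S.Tgraph At := hT
    rw [this]
    refine IsSeqClosed.isClosed ?_
    intro pn p hmem htend
    choose un hun h1n h2n using hmem
    have hq : ∀ n, ((pn n).1 + S.Agaminv ((pn n).2), (pn n).2) ∈ At.graph := by
      intro n
      have hfmem : S.Amax (un n) - (pn n).2 ∈ (S.Wsub At)ᗮ := by
        rw [h2n n]
        exact sub_projCl_mem_orthogonal _ _ _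
      have hkey := key_graph S At h1 hcl hfmem
      have hun' : (((un n : H), S.Amax (un n)) : H × H) ∈ At.graph := by
        have := At.mem_graph ⟨(un n : H), hun n⟩
        have heq : At ⟨(un n : H), hun n⟩ = S.Amax (un n) := h2.2 rfl
        rwa [heq] at this
      have hsub := At.graph.sub_mem hun' hkey
      have heq1 : ((un n : H) - S.Agaminv (S.Amax (un n) - (pn n).2),
          S.Amax (un n) - (S.Amax (un n) - (pn n).2))
          = (((pn n).1 + S.Agaminv ((pn n).2), (pn n).2) : H × H) := by
        rw [h1n n]
        simp [Setup.uzeta, map_sub]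
        abel
      rwa [Prod.mk_sub_mk, heq1] at hsub
    have hc : Continuous fun q : H × H => ((q.1 + S.Agaminv q.2, q.2) : H × H) := by
      fun_prop
    have htendq : Tendsto (fun n => ((pn n).1 + S.Agaminv ((pn n).2), (pn n).2))
        atTop (𝓝 (p.1 + S.Agaminv p.2, p.2)) := (hc.tendsto p).comp htend
    have hlim : ((p.1 + S.Agaminv p.2, p.2) : H × H) ∈ At.graph :=
      hcl.mem_of_tendsto htendq (Filter.Eventually.of_forall hq)
    obtain ⟨x', hx1, hx2⟩ := (LinearPMap.mem_graph_iff _).1 hlim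
    have hx1' : (x' : H) = p.1 + S.Agaminv p.2 := hx1
    have hdom : p.1 + S.Agaminv p.2 ∈ At.domain := hx1' ▸ x'.2
    have hp2W : p.2 ∈ S.Wsub At := by
      refine (S.isClosed_Wsub At).mem_of_tendsto ((continuous_snd.tendsto p).comp htend)
        (Filter.Eventually.of_forall fun n => ?_)
      show (pn n).2 ∈ S.Wsub At
      rw [h2n n]
      exact projCl_mem _ _ _
    refine ⟨⟨p.1 + S.Agaminv p.2, h2.1 hdom⟩, hdom, ?_, ?_⟩
    · have hval : S.Amax ⟨p.1 + S.Agaminv p.2, h2.1 hdom⟩ = p.2 := by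
        have := h2.2 (x := x') (y := ⟨p.1 + S.Agaminv p.2, h2.1 hdom⟩) hx1'
        rw [← this, hx2]
      simp [Setup.uzeta, hval]
    · have hval : S.Amax ⟨p.1 + S.Agaminv p.2, h2.1 hdom⟩ = p.2 := by
        have := h2.2 (x := x') (y := ⟨p.1 + S.Agaminv p.2, h2.1 hdom⟩) hx1'
        rw [← this, hx2]
      rw [hval, projCl_eq_self _ _ hp2W]
  · ext x
    simp only [Set.mem_setOf_eq, SetLike.mem_coe]
    constructor
    · intro hx
      refine ⟨h2.1 hx, ?_⟩
      have : ((S.uzeta ⟨x, h2.1 hx⟩, S.projW At (S.Amax ⟨x, h2.1 hx⟩)) : H × H)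
          ∈ S.Tgraph At := ⟨⟨x, h2.1 hx⟩, hx, rfl, rfl⟩
      show _ ∈ (T.graph : Set (H × H))
      rw [hT]; exact this
    · rintro ⟨hx, hgr⟩
      have hgr' : ((S.uzeta ⟨x, hx⟩, S.projW At (S.Amax ⟨x, hx⟩)) : H × H) ∈ S.Tgraph At := by
        rw [← hT]; exact hgr
      obtain ⟨u, hu, he1, he2⟩ := hgr'
      set d : S.Amax.domain := ⟨x, hx⟩ - u with hd
      have hfval : S.Amax d = S.Amax ⟨x, hx⟩ - S.Amax u := by
        rw [hd, LinearPMap.map_sub]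
      have hdz : (d : H) = S.Agaminv (S.Amax d) := by
        have he1' : x - S.Agaminv (S.Amax ⟨x, hx⟩) = (u : H) - S.Agaminv (S.Amax u) := he1
        have hco : (d : H) = x - (u : H) := rfl
        rw [hco, hfval, map_sub]
        linear_combination (norm := module) he1'
      have hforth : S.Amax d ∈ (S.Wsub At)ᗮ := by
        have hz : projCl (S.Wsub At) (S.isClosed_Wsub At) (S.Amax d) = 0 := by
          rw [hfval, map_sub]
          have he2' : projCl (S.Wsub At) (S.isClosed_Wsub At) (S.Amax ⟨x, hx⟩)
              = projCl (S.Wsub At) (S.isClosed_Wsub At) (S.Amax u) := he2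
          rw [he2', sub_self]
        have := sub_projCl_mem_orthogonal (S.Wsub At) (S.isClosed_Wsub At) (S.Amax d)
        rwa [hz, sub_zero] at this
      have hkey := key_graph S At h1 hcl hforth
      have hmemd : S.Agaminv (S.Amax d) ∈ At.domain :=
        LinearPMap.mem_domain_iff.2 ⟨_, hkey⟩
      have hxeq : x = (u : H) + S.Agaminv (S.Amax d) := by
        rw [← hdz]
        show x = (u : H) + ((x : H) - (u : H))
        abel
      rw [hxeq]
      exact At.domain.add_mem hu hmemd


end GrubbExt
end
end

section
/- (Theorem 5.5, inversion and Kreĭn resolvent formula.) Let Ã ∈ M be closed, corresponding to T : V → W, and let λ ∈ ρ(Ã) ∩ ρ(A_γ), where ρ(Ã) := {λ ∈ ℂ : Ã − λ : D(Ã) → H is bijective with bounded inverse}. Then the operator T + G^λ_{V,W} with domain D(T) is a bijection of D(T) onto W, M(λ) = −(T + G^λ_{V,W})^{-1}, and (Ã − λ)^{-1} = (A_γ − λ)^{-1} − i_{V_λ} ∘ E^λ_V ∘ M(λ) ∘ (E'^{λ̄}_W)* ∘ pr_{W_{λ̄}}, where E^λ_V : V → V_λ and E'^{λ̄}_W : W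 → W_{λ̄} are the bijections obtained by restricting E^λ and E'^{λ̄}, and (E'^{λ̄}_W)* is the adjoint of E'^{λ̄}_W. -/
noncomputable section

open Filter Topology

namespace GrubbExt

variable {H : Type*} [NormedAddCommGroup H] [InnerProductSpace ℂ H] [CompleteSpace H]

namespace Setup

local notation "⟪" x ", " y "⟫" => @inner ℂ _ _ x y

variable (S : Setup H)

lemma projCl_coe (K : Submodule ℂ H) (hK : IsClosed (K : Set H)) (z : H) :
    haveI : CompleteSpace K := hK.completeSpace_coe
    projCl K hK z = (K.orthogonalProjectionOnto z : H) := rfl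

lemma projCl_mem (K : Submodule ℂ H) (hK : IsClosed (K : Set H)) (z : H) :
    projCl K hK z ∈ K := by
  haveI : CompleteSpace K := hK.completeSpace_coe
  rw [projCl_coe]
  exact SetLike.coe_mem _

lemma projCl_of_mem {K : Submodule ℂ H} (hK : IsClosed (K : Set H)) {z : H} (hz : z ∈ K) :
    projCl K hK z = z := by
  haveI : CompleteSpace K := hK.completeSpace_coe
  rw [projCl_coe]
  exact K.starProjection_eq_self_iff.mpr hz

lemma inner_projCl_left {K : Submodule ℂ H} (hK : IsClosed (K : Set H)) (z : H) {y : H}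
    (hy : y ∈ K) : ⟪projCl K hK z, y⟫ = ⟪z, y⟫ := by
  haveI : CompleteSpace K := hK.completeSpace_coe
  have h : z - projCl K hK z ∈ Kᗮ := by
    rw [projCl_coe]
    exact K.sub_starProjection_mem_orthogonal z
  have h0 : ⟪z - projCl K hK z, y⟫ = 0 := (Submodule.mem_orthogonal' K _).mp h y hy
  rw [inner_sub_left, sub_eq_zero] at h0
  exact h0.symm

lemma Eop_apply (lam : ℂ) (R : H →L[ℂ] H) (z : H) : Eop lam R z = z + lam • R z := rfl

lemma Eop'_apply (lam : ℂ) (R : H →L[ℂ] H) (z : H) :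
    Eop' lam R z = z + (starRingEnd ℂ lam) • R z := rfl

lemma agam_mem_amax {x : H} (hx : x ∈ S.Agam.domain) : x ∈ S.Amax.domain :=
  S.Agam_le_max.1 hx

lemma amax_agam (p : S.Agam.domain) :
    S.Amax ⟨(p : H), S.agam_mem_amax p.2⟩ = S.Agam p :=
  (S.Agam_le_max.2 (x := p) (y := ⟨(p : H), S.agam_mem_amax p.2⟩) rfl).symm

lemma dense_Agam : Dense (S.Agam.domain : Set H) :=
  S.dense_Amin.mono (fun _ hx => S.Amin_le_Agam.1 hx)

lemma dense_At (At : H →ₗ.[ℂ] H) (h1 : S.Amin ≤ At) : Dense (At.domain : Set H) :=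
  S.dense_Amin.mono (fun _ hx => h1.1 hx)

lemma uzeta_sub (u v : S.Amax.domain) : S.uzeta (u - v) = S.uzeta u - S.uzeta v := by
  simp only [uzeta, LinearPMap.map_sub, Submodule.coe_sub, map_sub]
  abel

lemma uzeta_Agaminv (w : H) :
    S.uzeta ⟨S.Agaminv w, S.agam_mem_amax (S.Agaminv_mem w)⟩ = 0 := by
  have h : S.Amax ⟨S.Agaminv w, S.agam_mem_amax (S.Agaminv_mem w)⟩ = w := by
    rw [S.amax_agam ⟨S.Agaminv w, S.Agaminv_mem w⟩, S.Agaminv_right]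
  simp [uzeta, h]

lemma projW_of_mem {At : H →ₗ.[ℂ] H} {w : H} (hw : w ∈ S.Wsub At) : S.projW At w = w :=
  projCl_of_mem _ hw

lemma projW_mem (At : H →ₗ.[ℂ] H) (z : H) : S.projW At z ∈ S.Wsub At :=
  projCl_mem _ _ _

lemma inner_projW_left (At : H →ₗ.[ℂ] H) (z : H) {y : H} (hy : y ∈ S.Wsub At) :
    ⟪S.projW At z, y⟫ = ⟪z, y⟫ :=
  inner_projCl_left _ _ hy

lemma inner_projWL_left (At : H →ₗ.[ℂ] H) (lam : ℂ) (R' : H →L[ℂ] H) (z : H) {y : H}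
    (hy : y ∈ S.WLsub At lam R') : ⟪S.projWL At lam R' z, y⟫ = ⟪z, y⟫ :=
  inner_projCl_left _ _ hy

variable {lam : ℂ} {Rg RAt R' : H →L[ℂ] H} {At : H →ₗ.[ℂ] H}

lemma Agam_Rg (hRg : IsResolvent S.Agam lam Rg) (f : H) :
    S.Agam ⟨Rg f, hRg.mem f⟩ = f + lam • Rg f :=
  eq_add_of_sub_eq (hRg.right f)

lemma Eop_inj (hRg : IsResolvent S.Agam lam Rg) {z : H} (hz : Eop lam Rg z = 0) : z = 0 := by
  have hE : z + lam • Rg z = 0 := by rw [← Eop_apply, hz]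
  have h1 : Rg z = 0 := by
    have h := S.Agaminv_left ⟨Rg z, hRg.mem z⟩
    rw [S.Agam_Rg hRg z] at h
    have : S.Agaminv (z + lam • Rg z) = Rg z := h
    rw [hE] at this
    simpa using this.symm
  simpa [h1] using hE

lemma Rg_amax (hRg : IsResolvent S.Agam lam Rg) (u : S.Amax.domain) :
    Rg (S.Amax u - lam • (u : H)) = S.Agaminv (S.Amax u) - lam • Rg (S.uzeta u) := by
  have hAp : S.Agam ⟨S.Agaminv (S.Amax u), S.Agaminv_mem _⟩ = S.Amax u := S.Agaminv_right _
  have key : S.Amax u - lam • (u : H) =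
      (S.Agam ⟨S.Agaminv (S.Amax u), S.Agaminv_mem _⟩
        - lam • S.Agaminv (S.Amax u)) - lam • S.uzeta u := by
    rw [hAp]; simp only [uzeta]; module
  rw [key, map_sub, map_smul]
  rw [hRg.left ⟨S.Agaminv (S.Amax u), S.Agaminv_mem _⟩]

lemma claimA (hRg : IsResolvent S.Agam lam Rg) (u : S.Amax.domain) :
    Eop lam Rg (S.Amax u - lam • (u : H)) =
      S.Amax u - lam • (Eop lam Rg (S.uzeta u)) := by
  rw [Eop_apply, Eop_apply, S.Rg_amax hRg u]
  simp only [uzeta]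
  module

lemma E_uzeta (hRg : IsResolvent S.Agam lam Rg) (u : S.Amax.domain) :
    (u : H) - Rg (S.Amax u - lam • (u : H)) = Eop lam Rg (S.uzeta u) := by
  rw [S.Rg_amax hRg u, Eop_apply]
  simp only [uzeta]
  module

lemma Rg_adj (hRg : IsResolvent S.Agam lam Rg)
    (hR' : IsResolvent S.Agam.adjoint (starRingEnd ℂ lam) R') (a b : H) :
    ⟪Rg a, b⟫ = ⟪a, R' b⟫ := by
  have hb : b = S.Agam.adjoint ⟨R' b, hR'.mem b⟩ - (starRingEnd ℂ lam) • R' b :=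
    (hR'.right b).symm
  have hfa := (LinearPMap.adjoint_isFormalAdjoint S.dense_Agam) ⟨R' b, hR'.mem b⟩
      ⟨Rg a, hRg.mem a⟩
  have h1 : ⟪(Rg a : H), S.Agam.adjoint ⟨R' b, hR'.mem b⟩⟫
      = ⟪S.Agam ⟨Rg a, hRg.mem a⟩, R' b⟫ := by
    rw [← inner_conj_symm, hfa, inner_conj_symm]
  calc ⟪Rg a, b⟫
      = ⟪(Rg a : H), S.Agam.adjoint ⟨R' b, hR'.mem b⟩⟫
        - (starRingEnd ℂ lam) * ⟪Rg a, R' b⟫ := by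
        conv_lhs => rw [hb]
        rw [inner_sub_right, inner_smul_right]
    _ = ⟪a, R' b⟫ := by
        rw [h1, S.Agam_Rg hRg a, inner_add_left, inner_smul_left]
        ring

lemma Eop_adj (hRg : IsResolvent S.Agam lam Rg)
    (hR' : IsResolvent S.Agam.adjoint (starRingEnd ℂ lam) R') (a b : H) :
    ⟪Eop lam Rg a, b⟫ = ⟪a, Eop' lam R' b⟫ := by
  rw [Eop_apply, Eop'_apply, inner_add_left, inner_add_right, inner_smul_left,
    inner_smul_right, S.Rg_adj hRg hR' a b]

lemma claimD (hR' : IsResolvent S.Agam.adjoint (starRingEnd ℂ lam) R')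
    (v : S.Amax'.domain) :
    Eop' lam R' (S.vzeta v) = S.vzetaL lam R' v := by
  have hAq : S.Agam.adjoint ⟨S.Agamstarinv (S.Amax' v), S.Agamstarinv_mem _⟩ = S.Amax' v :=
    S.Agamstarinv_right _
  have key : S.Amax' v - (starRingEnd ℂ lam) • (v : H)
      = (S.Agam.adjoint ⟨S.Agamstarinv (S.Amax' v), S.Agamstarinv_mem _⟩
          - (starRingEnd ℂ lam) • S.Agamstarinv (S.Amax' v))
        - (starRingEnd ℂ lam) • S.vzeta v := by
    rw [hAq]; simp only [vzeta]; module
  rw [Eop'_apply]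
  unfold vzetaL
  rw [key, map_sub, map_smul, hR'.left ⟨S.Agamstarinv (S.Amax' v), S.Agamstarinv_mem _⟩]
  simp only [vzeta]
  module

lemma At_adjoint_le (h1 : S.Amin ≤ At) : At.adjoint ≤ S.Amax' := by
  have hd : Dense (At.domain : Set H) := S.dense_At At h1
  constructor
  · intro v hv
    refine LinearPMap.mem_adjoint_domain_of_exists _ ⟨At.adjoint ⟨v, hv⟩, fun u => ?_⟩
    rw [h1.2 (x := u) (y := ⟨(u : H), h1.1 u.2⟩) rfl]
    exact (LinearPMap.adjoint_isFormalAdjoint hd) ⟨v, hv⟩ ⟨(u : H), h1.1 u.2⟩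
  · intro x y hxy
    refine (LinearPMap.adjoint_apply_eq S.dense_Amin y fun u => ?_).symm
    rw [← hxy, h1.2 (x := u) (y := ⟨(u : H), h1.1 u.2⟩) rfl]
    exact (LinearPMap.adjoint_isFormalAdjoint hd) x ⟨(u : H), h1.1 u.2⟩

lemma At_adj_surj (h1 : S.Amin ≤ At) (hRAt : IsResolvent At lam RAt) (g : H) :
    ∃ v : At.adjoint.domain,
      At.adjoint v - (starRingEnd ℂ lam) • (v : H) = g := by
  have hd : Dense (At.domain : Set H) := S.dense_At At h1
  set v0 := ContinuousLinearMap.adjoint RAt g with hv0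
  have key : ∀ u : At.domain, ⟪g + (starRingEnd ℂ lam) • v0, (u : H)⟫ = ⟪v0, At u⟫ := by
    intro u
    have hs : ⟪v0, At u - lam • (u : H)⟫ = ⟪g, (u : H)⟫ := by
      rw [hv0, ContinuousLinearMap.adjoint_inner_left, hRAt.left u]
    rw [inner_sub_right, inner_smul_right] at hs
    have hAtu : ⟪v0, At u⟫ = ⟪g, (u : H)⟫ + lam * ⟪v0, (u : H)⟫ := by
      rw [← hs]; ring
    rw [hAtu, inner_add_left, inner_smul_left]
    simp [Complex.conj_conj]
  have hmem : v0 ∈ At.adjoint.domain :=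
    LinearPMap.mem_adjoint_domain_of_exists _ ⟨g + (starRingEnd ℂ lam) • v0, key⟩
  refine ⟨⟨v0, hmem⟩, ?_⟩
  rw [LinearPMap.adjoint_apply_eq hd ⟨v0, hmem⟩ key]
  abel

lemma claimE (h1 : S.Amin ≤ At) (h2 : At ≤ S.Amax)
    (hRg : IsResolvent S.Agam lam Rg)
    (hR' : IsResolvent S.Agam.adjoint (starRingEnd ℂ lam) R')
    (u : S.Amax.domain) (hu : (u : H) ∈ At.domain) (v : At.adjoint.domain) :
    ⟪S.vzetaL lam R' ⟨(v : H), (S.At_adjoint_le h1).1 v.2⟩, S.Amax u - lam • (u : H)⟫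
      = ⟪At.adjoint v - (starRingEnd ℂ lam) • (v : H), Eop lam Rg (S.uzeta u)⟫ := by
  have hd : Dense (At.domain : Set H) := S.dense_At At h1
  have hAv : S.Amax' ⟨(v : H), (S.At_adjoint_le h1).1 v.2⟩ = At.adjoint v :=
    ((S.At_adjoint_le h1).2 (x := v) (y := ⟨(v : H), (S.At_adjoint_le h1).1 v.2⟩) rfl).symm
  have h_vz : S.vzetaL lam R' ⟨(v : H), (S.At_adjoint_le h1).1 v.2⟩
      = (v : H) - R' (At.adjoint v - (starRingEnd ℂ lam) • (v : H)) := by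
    unfold vzetaL
    rw [hAv]
  have hAtu : At ⟨(u : H), hu⟩ = S.Amax u := h2.2 (x := ⟨(u : H), hu⟩) (y := u) rfl
  have hv_f : ⟪(v : H), S.Amax u - lam • (u : H)⟫
      = ⟪At.adjoint v - (starRingEnd ℂ lam) • (v : H), (u : H)⟫ := by
    rw [inner_sub_right, inner_smul_right, ← hAtu,
      ← (LinearPMap.adjoint_isFormalAdjoint hd) v ⟨(u : H), hu⟩,
      inner_sub_left, inner_smul_left]
    simp [Complex.conj_conj]
  have hR'g : ⟪R' (At.adjoint v - (starRingEnd ℂ lam) • (v : H)),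
      S.Amax u - lam • (u : H)⟫
      = ⟪At.adjoint v - (starRingEnd ℂ lam) • (v : H), Rg (S.Amax u - lam • (u : H))⟫ := by
    calc ⟪R' (At.adjoint v - (starRingEnd ℂ lam) • (v : H)), S.Amax u - lam • (u : H)⟫
        = starRingEnd ℂ ⟪S.Amax u - lam • (u : H),
            R' (At.adjoint v - (starRingEnd ℂ lam) • (v : H))⟫ := (inner_conj_symm _ _).symm
      _ = starRingEnd ℂ ⟪Rg (S.Amax u - lam • (u : H)),
            At.adjoint v - (starRingEnd ℂ lam) • (v : H)⟫ := by
          rw [S.Rg_adj hRg hR']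
      _ = _ := inner_conj_symm _ _
  rw [h_vz, inner_sub_left, hv_f, hR'g, ← inner_sub_right, S.E_uzeta hRg u]

lemma Gval_sub (At : H →ₗ.[ℂ] H) (lam : ℂ) (Rg : H →L[ℂ] H) (x y : H) :
    S.Gval At lam Rg (x - y) = S.Gval At lam Rg x - S.Gval At lam Rg y := by
  simp only [Gval, map_sub, smul_sub]
  abel

lemma sum_eq (hRg : IsResolvent S.Agam lam Rg) (u : S.Amax.domain) :
    S.projW At (S.Amax u) + S.Gval At lam Rg (S.uzeta u)
      = S.projW At (Eop lam Rg (S.Amax u - lam • (u : H))) := by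
  rw [Gval, S.claimA hRg u, map_sub]
  abel

lemma uniq0 (h1 : S.Amin ≤ At) (h2 : At ≤ S.Amax)
    (hRg : IsResolvent S.Agam lam Rg) (hRAt : IsResolvent At lam RAt)
    (hR' : IsResolvent S.Agam.adjoint (starRingEnd ℂ lam) R')
    (u : S.Amax.domain) (hu : (u : H) ∈ At.domain)
    (h0 : S.projW At (S.Amax u) + S.Gval At lam Rg (S.uzeta u) = 0) :
    S.uzeta u = 0 := by
  have hE : S.projW At (Eop lam Rg (S.Amax u - lam • (u : H))) = 0 := by
    rw [← S.sum_eq hRg u]; exact h0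
  have hperp : ∀ z ∈ S.Wsub At, ⟪z, Eop lam Rg (S.Amax u - lam • (u : H))⟫ = 0 := by
    intro z hz
    have h1' : ⟪Eop lam Rg (S.Amax u - lam • (u : H)), z⟫ = 0 := by
      calc ⟪Eop lam Rg (S.Amax u - lam • (u : H)), z⟫
          = ⟪projCl (S.Wsub At) (S.isClosed_Wsub At)
              (Eop lam Rg (S.Amax u - lam • (u : H))), z⟫ :=
            (inner_projCl_left _ _ hz).symm
        _ = 0 := by
            rw [show projCl (S.Wsub At) (S.isClosed_Wsub At)
                (Eop lam Rg (S.Amax u - lam • (u : H))) = 0 from hE]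
            simp
    have := congrArg (starRingEnd ℂ) h1'
    rwa [inner_conj_symm, map_zero] at this
  have hEz : ∀ g : H, ⟪g, Eop lam Rg (S.uzeta u)⟫ = 0 := by
    intro g
    obtain ⟨v, hv⟩ := S.At_adj_surj h1 hRAt g
    have hw : S.vzeta ⟨(v : H), (S.At_adjoint_le h1).1 v.2⟩ ∈ S.Wsub At :=
      Submodule.le_topologicalClosure _
        (Submodule.subset_span ⟨⟨(v : H), (S.At_adjoint_le h1).1 v.2⟩, v.2, rfl⟩)
    have h3 := hperp _ hw
    have h4 : ⟪S.vzeta ⟨(v : H), (S.At_adjoint_le h1).1 v.2⟩,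
        Eop lam Rg (S.Amax u - lam • (u : H))⟫
        = ⟪Eop' lam R' (S.vzeta ⟨(v : H), (S.At_adjoint_le h1).1 v.2⟩),
            S.Amax u - lam • (u : H)⟫ := by
      calc _ = starRingEnd ℂ ⟪Eop lam Rg (S.Amax u - lam • (u : H)),
              S.vzeta ⟨(v : H), (S.At_adjoint_le h1).1 v.2⟩⟫ := (inner_conj_symm _ _).symm
        _ = starRingEnd ℂ ⟪S.Amax u - lam • (u : H),
              Eop' lam R' (S.vzeta ⟨(v : H), (S.At_adjoint_le h1).1 v.2⟩)⟫ := by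
            rw [S.Eop_adj hRg hR']
        _ = _ := inner_conj_symm _ _
    rw [h4, S.claimD hR', S.claimE h1 h2 hRg hR' u hu v, hv] at h3
    exact h3
  have hzero : Eop lam Rg (S.uzeta u) = 0 :=
    inner_self_eq_zero.mp (hEz (Eop lam Rg (S.uzeta u)))
  exact S.Eop_inj hRg hzero

lemma Eop'_mem_WL (hR' : IsResolvent S.Agam.adjoint (starRingEnd ℂ lam) R')
    {w : H} (hw : w ∈ S.Wsub At) :
    Eop' lam R' w ∈ S.WLsub At lam R' := by
  have hle : S.Wsub At ≤ (S.WLsub At lam R').comap (Eop' lam R' : H →ₗ[ℂ] H) := by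
    apply Submodule.topologicalClosure_minimal
    · rw [Submodule.span_le]
      rintro x ⟨v, hv, rfl⟩
      show Eop' lam R' (S.vzeta v) ∈ S.WLsub At lam R'
      rw [S.claimD hR']
      exact Submodule.le_topologicalClosure _ (Submodule.subset_span ⟨v, hv, rfl⟩)
    · exact (S.isClosed_WLsub At lam R').preimage (Eop' lam R').continuous
  exact hle hw

lemma E_uzeta_RAt (h2 : At ≤ S.Amax) (hRg : IsResolvent S.Agam lam Rg)
    (hRAt : IsResolvent At lam RAt) (f : H) :
    Eop lam Rg (S.uzeta ⟨RAt f, h2.1 (hRAt.mem f)⟩) = RAt f - Rg f := by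
  have hAmax : S.Amax ⟨RAt f, h2.1 (hRAt.mem f)⟩ = f + lam • RAt f := by
    rw [← h2.2 (x := ⟨RAt f, hRAt.mem f⟩) (y := ⟨RAt f, h2.1 (hRAt.mem f)⟩) rfl]
    exact eq_add_of_sub_eq (hRAt.right f)
  have hAinvf : S.Agaminv f = Rg f - lam • S.Agaminv (Rg f) := by
    have h := S.Agaminv_left ⟨Rg f, hRg.mem f⟩
    rw [S.Agam_Rg hRg f] at h
    have h' : S.Agaminv f + lam • S.Agaminv (Rg f) = Rg f := by
      rw [← map_smul, ← map_add]; exact h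
    exact eq_sub_of_add_eq h'
  have hz : S.uzeta ⟨RAt f, h2.1 (hRAt.mem f)⟩
      = (RAt f - Rg f) - lam • S.Agaminv (RAt f - Rg f) := by
    show (RAt f) - S.Agaminv (S.Amax ⟨RAt f, h2.1 (hRAt.mem f)⟩) = _
    rw [hAmax, map_add, map_smul, hAinvf, map_sub]
    module
  have hRgz : Rg ((RAt f - Rg f) - lam • S.Agaminv (RAt f - Rg f)) = S.Agaminv (RAt f - Rg f) := by
    have h := hRg.left ⟨S.Agaminv (RAt f - Rg f), S.Agaminv_mem _⟩
    rwa [S.Agaminv_right (RAt f - Rg f)] at h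
  rw [hz, Eop_apply, hRgz]
  module

end Setup


theorem statement_14 (S : Setup H) (At : H →ₗ.[ℂ] H)
    (h1 : S.Amin ≤ At) (h2 : At ≤ S.Amax)
    (hcl : IsClosed (At.graph : Set (H × H)))
    (T : H →ₗ.[ℂ] H) (hT : (T.graph : Set (H × H)) = S.Tgraph At)
    (lam : ℂ) (Rg RAt R' : H →L[ℂ] H)
    (hRg : IsResolvent S.Agam lam Rg) (hRAt : IsResolvent At lam RAt)
    (hR' : IsResolvent S.Agam.adjoint (starRingEnd ℂ lam) R') :
    (∀ w : H, w ∈ S.Wsub At →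
      ∃! x : H, ∃ y : H, (x, y) ∈ T.graph ∧ y + S.Gval At lam Rg x = w) ∧
    (∀ w : H, w ∈ S.Wsub At → ∀ x y : H, (x, y) ∈ T.graph →
      y + S.Gval At lam Rg x = w → S.Mval At h2 hRAt w = -x) ∧
    (∀ f r : H, r ∈ S.Wsub At →
      (∀ w : H, w ∈ S.Wsub At →
        (inner ℂ r w : ℂ) = (inner ℂ (S.projWL At lam R' f) (Eop' lam R' w) : ℂ)) →
      RAt f = Rg f - Eop lam Rg (S.Mval At h2 hRAt r)) := by
  have memT : ∀ p : H × H, p ∈ T.graph ↔ p ∈ S.Tgraph At := fun p => by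
    rw [← SetLike.mem_coe, hT]
  -- the explicit solution for every `w : H`
  have sol : ∀ w : H, ∃ x y : H, (x, y) ∈ S.Tgraph At ∧
      y + S.Gval At lam Rg x = S.projW At w ∧ S.Mval At h2 hRAt w = -x := by
    intro w
    have hbA : RAt (w - lam • S.Agaminv w) ∈ At.domain := hRAt.mem _
    refine ⟨S.uzeta ⟨RAt (w - lam • S.Agaminv w), h2.1 hbA⟩,
      S.projW At (S.Amax ⟨RAt (w - lam • S.Agaminv w), h2.1 hbA⟩),
      ⟨⟨RAt (w - lam • S.Agaminv w), h2.1 hbA⟩, hbA, rfl, rfl⟩, ?_, ?_⟩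
    · rw [S.sum_eq hRg]
      have hres : S.Amax ⟨RAt (w - lam • S.Agaminv w), h2.1 hbA⟩
          - lam • RAt (w - lam • S.Agaminv w) = w - lam • S.Agaminv w := by
        rw [← h2.2 (x := ⟨RAt (w - lam • S.Agaminv w), hbA⟩)
          (y := ⟨RAt (w - lam • S.Agaminv w), h2.1 hbA⟩) rfl]
        exact hRAt.right _
      rw [show S.Amax ⟨RAt (w - lam • S.Agaminv w), h2.1 hbA⟩
          - lam • ((⟨RAt (w - lam • S.Agaminv w), h2.1 hbA⟩ : S.Amax.domain) : H)
          = w - lam • S.Agaminv w from hres]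
      have hERg : Rg (w - lam • S.Agaminv w) = S.Agaminv w := by
        have h := hRg.left ⟨S.Agaminv w, S.Agaminv_mem w⟩
        rwa [S.Agaminv_right w] at h
      rw [Setup.Eop_apply, hERg]
      congr 1
      abel
    · unfold Setup.Mval
      have hsplit : (⟨S.Agaminv w - RAt (w - lam • S.Agaminv w),
          S.mem_Amax_res At h2 hRAt w⟩ : S.Amax.domain)
          = ⟨S.Agaminv w, S.agam_mem_amax (S.Agaminv_mem w)⟩
            - ⟨RAt (w - lam • S.Agaminv w), h2.1 hbA⟩ := by
        apply Subtype.ext; rfl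
      rw [hsplit, S.uzeta_sub, S.uzeta_Agaminv, zero_sub]
  -- uniqueness
  have uniq : ∀ x y x' y' : H, (x, y) ∈ T.graph → (x', y') ∈ T.graph →
      y + S.Gval At lam Rg x = y' + S.Gval At lam Rg x' → x = x' := by
    intro x y x' y' hx hx' heq
    have hsub : ((x, y) - (x', y')) ∈ T.graph := sub_mem hx hx'
    rw [memT] at hsub
    obtain ⟨u, hu, h1u, h2u⟩ := hsub
    simp only [Prod.fst_sub, Prod.snd_sub] at h1u h2u
    have h2u' : y - y' = S.projW At (S.Amax u) := h2u
    have h0 : S.projW At (S.Amax u) + S.Gval At lam Rg (S.uzeta u) = 0 := by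
      rw [← h1u, ← h2u', S.Gval_sub]
      rw [show y - y' + (S.Gval At lam Rg x - S.Gval At lam Rg x')
          = (y + S.Gval At lam Rg x) - (y' + S.Gval At lam Rg x') by abel, heq, sub_self]
    have hz := S.uniq0 h1 h2 hRg hRAt hR' u hu h0
    have : x - x' = 0 := by rw [h1u, hz]
    exact sub_eq_zero.mp this
  have part2 : ∀ w : H, w ∈ S.Wsub At → ∀ x y : H, (x, y) ∈ T.graph →
      y + S.Gval At lam Rg x = w → S.Mval At h2 hRAt w = -x := by
    intro w hw x y hxy hsum
    obtain ⟨x0, y0, hg, hsum0, hM⟩ := sol w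
    rw [S.projW_of_mem hw] at hsum0
    have hx0 : x = x0 :=
      uniq x y x0 y0 hxy ((memT _).mpr hg) (hsum.trans hsum0.symm)
    rw [hM, hx0]
  refine ⟨?_, part2, ?_⟩
  · -- part 1
    intro w hw
    obtain ⟨x0, y0, hg, hsum0, hM⟩ := sol w
    rw [S.projW_of_mem hw] at hsum0
    refine ⟨x0, ⟨y0, (memT _).mpr hg, hsum0⟩, ?_⟩
    rintro x ⟨y, hxy, hyx⟩
    exact uniq x y x0 y0 hxy ((memT _).mpr hg) (hyx.trans hsum0.symm)
  · -- part 3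
    intro f r hr hinner
    have hr0W : S.projW At (Eop lam Rg f) ∈ S.Wsub At := S.projW_mem At _
    have hrr0 : r = S.projW At (Eop lam Rg f) := by
      have key : ∀ w ∈ S.Wsub At,
          (inner ℂ (r - S.projW At (Eop lam Rg f)) w : ℂ) = 0 := by
        intro w hw
        have h1' : (inner ℂ (S.projW At (Eop lam Rg f)) w : ℂ) = inner ℂ (Eop lam Rg f) w :=
          S.inner_projW_left At _ hw
        have h2' : (inner ℂ (Eop lam Rg f) w : ℂ) = inner ℂ f (Eop' lam R' w) :=
          S.Eop_adj hRg hR' f w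
        have h3' : (inner ℂ (S.projWL At lam R' f) (Eop' lam R' w) : ℂ)
            = inner ℂ f (Eop' lam R' w) :=
          S.inner_projWL_left At lam R' _ (S.Eop'_mem_WL hR' hw)
        rw [inner_sub_left, hinner w hw, h3', h1', h2', sub_self]
      have h0 := key _ (sub_mem hr hr0W)
      rw [inner_self_eq_zero, sub_eq_zero] at h0
      exact h0
    have hgraph : (S.uzeta ⟨RAt f, h2.1 (hRAt.mem f)⟩,
        S.projW At (S.Amax ⟨RAt f, h2.1 (hRAt.mem f)⟩)) ∈ T.graph :=
      (memT _).mpr ⟨⟨RAt f, h2.1 (hRAt.mem f)⟩, hRAt.mem f, rfl, rfl⟩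
    have hsum : S.projW At (S.Amax ⟨RAt f, h2.1 (hRAt.mem f)⟩)
        + S.Gval At lam Rg (S.uzeta ⟨RAt f, h2.1 (hRAt.mem f)⟩)
        = S.projW At (Eop lam Rg f) := by
      rw [S.sum_eq hRg]
      congr 2
      rw [← h2.2 (x := ⟨RAt f, hRAt.mem f⟩) (y := ⟨RAt f, h2.1 (hRAt.mem f)⟩) rfl]
      exact hRAt.right f
    have hMr0 := part2 _ hr0W _ _ hgraph hsum
    rw [hrr0, hMr0, map_neg, S.E_uzeta_RAt h2 hRg hRAt f]
    abel


end GrubbExt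
end
end
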